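/- Let E ⊆ F₁, ..., Fₙ and F be number fields (or more abstractly, finite Galois extensions of Q inside a fixed algebraic closure) with F the compositum of F₁,...,Fₙ, all Fᵢ Galois over Q containing E, and the Fᵢ linearly disjoint over E, so that [F:Q] = [E:Q]·∏ᵢ[Fᵢ:E]. Fix a conjugacy class C of Gal(E|Q) and for each i a nonempty conjugacy class Cᵢ of Gal(Fᵢ|Q) restricting into C. Then the number of σ ∈ Gal(F|Q) with σ|_E ∈ C but σ|_{Fᵢ} ∉ Cᵢ for every i is at most |C|·∏ᵢ([Fᵢ:E] − 1). -/
import Mathlib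


open IntermediateField

set_option synthInstance.maxHeartbeats 1000000

lemma fd_transport {M : Type*} [AddCommGroup M] (m1 m2 : Module ℚ M)
    (h : @FiniteDimensional ℚ M _ _ m1) : @FiniteDimensional ℚ M _ _ m2 := by
  rwa [Subsingleton.elim m2 m1]

lemma nat_card_subtype_ne {α : Type*} [Finite α] (a : α) :
    Nat.card {x : α // x ≠ a} = Nat.card α - 1 := by
  classical
  haveI := Fintype.ofFinite α
  simp only [Nat.card_eq_fintype_card, ne_eq]
  rw [Fintype.card_subtype_compl (p := fun x => x = a), Fintype.card_subtype_eq]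

set_option maxHeartbeats 1000000 in
/-- (The counting estimate in Step 3 of the proof of the main theorem.)
Let `E ⊆ F₁, …, Fₙ` be finite Galois extensions of `ℚ` inside a fixed algebraic closure
`A`, with compositum `F`, the `Fᵢ` linearly disjoint over `E` (the restriction map
`Gal(F|ℚ) → ∏ᵢ Gal(Fᵢ|ℚ)` is injective with image the fiber product over `Gal(E|ℚ)`).
Fix a conjugacy class `C` of `Gal(E|ℚ)` (the class of `c`) and for each `i` a conjugacy
class `Cᵢ` of `Gal(Fᵢ|ℚ)` (the class of `cᵢ`) restricting into `C` and meeting every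
restriction fiber over `C`.  Then the number of `σ ∈ Gal(F|ℚ)` with `σ|_E ∈ C` but
`σ|_{Fᵢ} ∉ Cᵢ` for every `i` is at most `|C| · ∏ᵢ ([Fᵢ:E] − 1)`, where
`[Fᵢ:E] = |ker(Gal(Fᵢ|ℚ) → Gal(E|ℚ))|`. -/
theorem galois_counting_bound
    {A : Type*} [Field A] [Algebra ℚ A] [IsAlgClosure ℚ A]
    {ι : Type*} [Fintype ι]
    (E F : IntermediateField ℚ A) (Fi : ι → IntermediateField ℚ A)
    (hle : ∀ i, E ≤ Fi i) (hleF : ∀ i, Fi i ≤ F) (hEF : E ≤ F)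
    (hcomp : F = ⨆ i, Fi i)
    (hfdE : FiniteDimensional ℚ ↥E) (hfd : ∀ i, FiniteDimensional ℚ ↥(Fi i))
    (hfdF : FiniteDimensional ℚ ↥F)
    (hgalE : IsGalois ℚ ↥E) (hgal : ∀ i, IsGalois ℚ ↥(Fi i)) (hgalF : IsGalois ℚ ↥F)
    -- the restriction homomorphisms, characterized by compatibility with the inclusions
    (pE : ∀ i, (↥(Fi i) ≃ₐ[ℚ] ↥(Fi i)) →* (↥E ≃ₐ[ℚ] ↥E))
    (hpE : ∀ i (σ : ↥(Fi i) ≃ₐ[ℚ] ↥(Fi i)) (x : ↥E),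
      inclusion (hle i) (pE i σ x) = σ (inclusion (hle i) x))
    (q : ∀ i, (↥F ≃ₐ[ℚ] ↥F) →* (↥(Fi i) ≃ₐ[ℚ] ↥(Fi i)))
    (hq : ∀ i (σ : ↥F ≃ₐ[ℚ] ↥F) (x : ↥(Fi i)),
      inclusion (hleF i) (q i σ x) = σ (inclusion (hleF i) x))
    (rE : (↥F ≃ₐ[ℚ] ↥F) →* (↥E ≃ₐ[ℚ] ↥E))
    (hrE : ∀ (σ : ↥F ≃ₐ[ℚ] ↥F) (x : ↥E),
      inclusion hEF (rE σ x) = σ (inclusion hEF x))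
    -- linear disjointness of the `Fᵢ` over `E`
    (hinj : Function.Injective fun (σ : ↥F ≃ₐ[ℚ] ↥F) => fun i => q i σ)
    (hdisj : ∀ τ : (i : ι) → (↥(Fi i) ≃ₐ[ℚ] ↥(Fi i)),
      (∀ i j, pE i (τ i) = pE j (τ j)) → ∃ σ : ↥F ≃ₐ[ℚ] ↥F, ∀ i, q i σ = τ i)
    -- the conjugacy classes
    (c : ↥E ≃ₐ[ℚ] ↥E) (ci : ∀ i, ↥(Fi i) ≃ₐ[ℚ] ↥(Fi i))
    (hmap : ∀ i (x : ↥(Fi i) ≃ₐ[ℚ] ↥(Fi i)), IsConj (ci i) x → IsConj c (pE i x))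
    (hmeet : ∀ i (τ : ↥E ≃ₐ[ℚ] ↥E), IsConj c τ →
      ∃ x : ↥(Fi i) ≃ₐ[ℚ] ↥(Fi i), IsConj (ci i) x ∧ pE i x = τ) :
    Nat.card {σ : ↥F ≃ₐ[ℚ] ↥F // IsConj c (rE σ) ∧ ∀ i, ¬ IsConj (ci i) (q i σ)}
      ≤ Set.ncard {x : ↥E ≃ₐ[ℚ] ↥E | IsConj c x} * ∏ i, (Nat.card (pE i).ker - 1) := by
  classical
  haveI := hfdE
  haveI := hfdF
  -- compatibility: pE i ∘ q i = rE
  have hcomm : ∀ i (σ : ↥F ≃ₐ[ℚ] ↥F), pE i (q i σ) = rE σ := by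
    intro i σ
    apply AlgEquiv.ext
    intro x
    apply Subtype.val_injective
    have h1 := congrArg Subtype.val (hpE i (q i σ) x)
    have h2 := congrArg Subtype.val (hq i σ (inclusion (hle i) x))
    have h3 := congrArg Subtype.val (hrE σ x)
    have h4 : inclusion (hleF i) (inclusion (hle i) x) = inclusion hEF x := by
      apply Subtype.val_injective
      simp [coe_inclusion]
    simp only [coe_inclusion] at h1 h2 h3
    rw [h4] at h2
    calc ((pE i (q i σ) x : ↥E) : A) = _ := h1
    _ = _ := h2
    _ = _ := h3.symm
  set CE := {τ : ↥E ≃ₐ[ℚ] ↥E // IsConj c τ} with hCE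
  obtain ⟨X, hX1, hX2⟩ : ∃ X : ∀ i, CE → (↥(Fi i) ≃ₐ[ℚ] ↥(Fi i)),
      (∀ i τ, IsConj (ci i) (X i τ)) ∧ (∀ i τ, pE i (X i τ) = τ.1) := by
    choose X h1 h2 using fun i (τ : CE) => hmeet i τ.1 τ.2
    exact ⟨X, h1, h2⟩
  set S := {σ : ↥F ≃ₐ[ℚ] ↥F // IsConj c (rE σ) ∧ ∀ i, ¬ IsConj (ci i) (q i σ)} with hS
  have hker : ∀ (σ : S) i,
      (q i σ.1) * (X i ⟨rE σ.1, σ.2.1⟩)⁻¹ ∈ (pE i).ker := by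
    intro σ i
    rw [MonoidHom.mem_ker, map_mul, map_inv, hcomm, hX2]
    exact mul_inv_cancel _
  let f : S → CE × (∀ i, {k : (pE i).ker // k ≠ 1}) := fun σ =>
    ⟨⟨rE σ.1, σ.2.1⟩, fun i => ⟨⟨(q i σ.1) * (X i ⟨rE σ.1, σ.2.1⟩)⁻¹, hker σ i⟩, by
      intro h
      apply σ.2.2 i
      have h' : (q i σ.1) * (X i ⟨rE σ.1, σ.2.1⟩)⁻¹ = 1 := congrArg Subtype.val h
      have : q i σ.1 = X i ⟨rE σ.1, σ.2.1⟩ := by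
        rwa [mul_inv_eq_one] at h'
      rw [this]
      exact hX1 i _⟩⟩
  have hf : Function.Injective f := by
    intro σ σ' h
    have h1 : rE σ.1 = rE σ'.1 := congrArg (fun z : CE × _ => (z.1 : ↥E ≃ₐ[ℚ] ↥E)) h
    have hXe : ∀ i, X i ⟨rE σ.1, σ.2.1⟩ = X i ⟨rE σ'.1, σ'.2.1⟩ := fun i =>
      congrArg (X i) (Subtype.ext h1)
    apply Subtype.ext
    apply hinj
    funext i
    have h3 : (q i σ.1) * (X i ⟨rE σ.1, σ.2.1⟩)⁻¹
        = (q i σ'.1) * (X i ⟨rE σ'.1, σ'.2.1⟩)⁻¹ :=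
      congrArg (fun z : CE × (∀ i, {k : (pE i).ker // k ≠ 1}) =>
        ((z.2 i : (pE i).ker) : ↥(Fi i) ≃ₐ[ℚ] ↥(Fi i))) h
    rw [hXe i] at h3
    exact mul_right_cancel h3
  haveI : ∀ i, Fintype (↥(Fi i) ≃ₐ[ℚ] ↥(Fi i)) := by
    intro i
    exact @AlgEquiv.fintype ℚ ↥(Fi i) _ _ _ (fd_transport _ _ (by exact hfd i))
  haveI : Fintype (↥E ≃ₐ[ℚ] ↥E) := @AlgEquiv.fintype ℚ ↥E _ _ _ (fd_transport _ _ (by exact hfdE))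
  haveI : Finite CE := Subtype.finite
  haveI : ∀ i, Finite {k : (pE i).ker // k ≠ 1} := fun i => Subtype.finite
  calc Nat.card S ≤ Nat.card (CE × (∀ i, {k : (pE i).ker // k ≠ 1})) :=
        Nat.card_le_card_of_injective f hf
    _ = Nat.card CE * ∏ i, Nat.card {k : (pE i).ker // k ≠ 1} := by
        rw [Nat.card_prod, Nat.card_pi]
    _ = Set.ncard {x : ↥E ≃ₐ[ℚ] ↥E | IsConj c x} * ∏ i, (Nat.card (pE i).ker - 1) := by
        congr 1
        refine Finset.prod_congr rfl fun i _ => ?_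
        exact nat_card_subtype_ne (1 : (pE i).ker)
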